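/- Let α be a type of atoms, let G be a ground program over α in which every rule has a finite positive body, let E ⊆ G be an embedding program for G, and let A be an answer set of G. Then for every atom a ∈ A there exists a rule r ∈ E with a ∈ H(r) and A ⊨ B(r); consequently A ⊆ Heads(E). -/
import Mathlib


structure GroundRule (α : Type*) where
  head : Set α
  posBody : Set α
  negBody : Set α

namespace GroundRule

variable {α : Type*}

/-- `Heads R` is the set of all head atoms of rules in `R`. -/
def Heads (R : Set (GroundRule α)) : Set α := ⋃ r ∈ R, r.head

/-- `R` body-embeds `r` (written `R ⊢_b r`). -/
def BodyEmbeds (R : Set (GroundRule α)) (r : GroundRule α) : Prop :=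
  ∀ a ∈ r.posBody, ∃ r' ∈ R, a ∈ r'.head

/-- `R` embeds `r` (written `R ⊢ r`): either `R` does not body-embed `r`,
or `R` head-embeds `r` (i.e. `r ∈ R`). -/
def Embeds (R : Set (GroundRule α)) (r : GroundRule α) : Prop :=
  ¬ BodyEmbeds R r ∨ r ∈ R

/-- `E` is an embedding program for the ground program `G`. -/
def IsEmbeddingProgram (G E : Set (GroundRule α)) : Prop :=
  E ⊆ G ∧ ∀ r ∈ G, Embeds E r

/-- The fact rule `a.` for an atom `a`. -/
def factRule (a : α) : GroundRule α := ⟨{a}, ∅, ∅⟩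

/-- `factRules F` is the set of fact rules `{a. : a ∈ F}`. -/
def factRules (F : Set α) : Set (GroundRule α) := factRule '' F

/-- The instantiation operator `Inst(P, S) = {r ∈ P : B⁺(r) ⊆ S}`. -/
def Inst (P : Set (GroundRule α)) (S : Set α) : Set (GroundRule α) :=
  {r ∈ P | r.posBody ⊆ S}

/-- Interpretation `I` satisfies the body of `r`. -/
def SatBody (I : Set α) (r : GroundRule α) : Prop :=
  r.posBody ⊆ I ∧ r.negBody ∩ I = ∅

/-- Interpretation `I` satisfies the rule `r`. -/
def SatRule (I : Set α) (r : GroundRule α) : Prop :=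
  ¬ SatBody I r ∨ (r.head ∩ I).Nonempty

/-- `I` is a model of the ground program `G`. -/
def IsModel (I : Set α) (G : Set (GroundRule α)) : Prop :=
  ∀ r ∈ G, SatRule I r

/-- FLP reduct `G^I = {r ∈ G : I ⊨ B(r)}`. -/
def reduct (G : Set (GroundRule α)) (I : Set α) : Set (GroundRule α) :=
  {r ∈ G | SatBody I r}

/-- `A` is an answer set of `G`: `A` is a model of `G^A` minimal w.r.t. `⊆`. -/
def IsAnswerSet (G : Set (GroundRule α)) (A : Set α) : Prop :=
  IsModel A (reduct G A) ∧ ∀ B, B ⊂ A → ¬ IsModel B (reduct G A)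

/-- `AS G` is the set of all answer sets of `G`. -/
def AS (G : Set (GroundRule α)) : Set (Set α) := {A | IsAnswerSet G A}

theorem Heads_mono {R R' : Set (GroundRule α)} (h : R ⊆ R') : Heads R ⊆ Heads R' := by
  intro a ha
  simp only [Heads, Set.mem_iUnion, exists_prop] at ha ⊢
  obtain ⟨r, hr, har⟩ := ha
  exact ⟨r, h hr, har⟩

/-- The monotone operator `R ↦ Inst(P, Heads(R) ∪ F)`. -/
def InstOp (P : Set (GroundRule α)) (F : Set α) :
    Set (GroundRule α) →o Set (GroundRule α) where
  toFun R := Inst P (Heads R ∪ F)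
  monotone' := fun _ _ h _ hr =>
    ⟨hr.1, hr.2.trans (Set.union_subset_union_left F (Heads_mono h))⟩

/-- `Inst^∞(P, F)`: the least fixpoint of `R ↦ Inst(P, Heads(R) ∪ F)`. -/
def InstInf (P : Set (GroundRule α)) (F : Set α) : Set (GroundRule α) :=
  OrderHom.lfp (InstOp P F)

end GroundRule

open GroundRule

/-- if `E` is an embedding program for `G` and `A` an answer set of `G`,
then every `a ∈ A` is head of a rule of `E` whose body is satisfied by `A`;
consequently `A ⊆ Heads(E)`. -/
theorem answerSet_supported_by_embedding {α : Type*} (G E : Set (GroundRule α))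
    (hfin : ∀ r ∈ G, r.posBody.Finite)
    (hE : IsEmbeddingProgram G E)
    (A : Set α) (hA : IsAnswerSet G A) :
    (∀ a ∈ A, ∃ r ∈ E, a ∈ r.head ∧ SatBody A r) ∧ A ⊆ Heads E := by
  obtain ⟨hmod, hmin⟩ := hA
  set C : Set α := {a ∈ A | ∃ r ∈ E, a ∈ r.head ∧ SatBody A r} with hCdef
  have hCA : C ⊆ A := fun a ha => ha.1
  have hCmod : IsModel C (reduct G A) := by
    intro r hr
    obtain ⟨hrG, hsatA⟩ := hr
    by_cases hb : SatBody C r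
    · have hbe : BodyEmbeds E r := by
        intro a ha
        obtain ⟨_, r', hr'E, hhead, _⟩ := hb.1 ha
        exact ⟨r', hr'E, hhead⟩
      have hrE : r ∈ E := (hE.2 r hrG).resolve_left (not_not_intro hbe)
      have hne : (r.head ∩ A).Nonempty :=
        (hmod r ⟨hrG, hsatA⟩).resolve_left (not_not_intro hsatA)
      obtain ⟨b, hbh, hbA⟩ := hne
      exact Or.inr ⟨b, hbh, hbA, r, hrE, hbh, hsatA⟩
    · exact Or.inl hb
  have hCeq : C = A := by
    by_contra h
    exact hmin C ⟨hCA, fun hac => h (Set.Subset.antisymm hCA hac)⟩ hCmod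
  constructor
  · intro a ha
    exact (hCeq ▸ ha : a ∈ C).2
  · intro a ha
    obtain ⟨r, hrE, hh, _⟩ := (hCeq ▸ ha : a ∈ C).2
    simp only [Heads, Set.mem_iUnion, exists_prop]
    exact ⟨r, hrE, hh⟩
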